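/- There exist constants ε>0 and K≥1 (depending only on the model parameters) such that, almost surely in (G,z), whenever t,|λ|,|η| ≤ ε, the Gibbs exponential moment satisfies ⟨exp(t‖σ⃗‖²)⟩_{λ,η} ≤ exp(KN(‖z̄‖² + ‖Ḡ‖_op² + 1 + h²)), where z̄:=z/√N and ‖Ḡ‖_op is the operator norm of Ḡ. -/

import Mathlib

open MeasureTheory ProbabilityTheory Real Filter

noncomputable section

/-- Law of the disorder `(G, z)`: i.i.d. standard gaussian matrix entries and
i.i.d. `N(0, Δ*)` noise. -/
def disorder (M N : ℕ) (Δ : ℝ) : Measure ((Fin M → Fin N → ℝ) × (Fin M → ℝ)) :=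
  (Measure.pi fun _ : Fin M => Measure.pi fun _ : Fin N => gaussianReal 0 1).prod
    (Measure.pi fun _ : Fin M => gaussianReal 0 Δ.toNNReal)

/-- `S_k(σ) = (Ḡ σ)_k` with `Ḡ = G/√N`. -/
def Sk {M N : ℕ} (G : Fin M → Fin N → ℝ) (σ : Fin N → ℝ) (k : Fin M) : ℝ :=
  (∑ i, G k i * σ i) / Real.sqrt (N : ℝ)

/-- Euclidean norm of a vector in `ℝⁿ`. -/
def vnorm {n : ℕ} (s : Fin n → ℝ) : ℝ := Real.sqrt (∑ ℓ, (s ℓ) ^ 2)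

/-- Euclidean norm of a replica configuration `σ⃗ ∈ (ℝ^N)ⁿ`. -/
def cnorm {n N : ℕ} (σv : Fin n → Fin N → ℝ) : ℝ := Real.sqrt (∑ ℓ, ∑ i, (σv ℓ i) ^ 2)

/-- Generalized overlap `R(σ⃗) = (1/N) Σ_i φ(σ_i¹,…,σ_iⁿ)`. -/
def Rgen {n N : ℕ} (φ : (Fin n → ℝ) → ℝ) (σv : Fin n → Fin N → ℝ) : ℝ :=
  (∑ i, φ (fun ℓ => σv ℓ i)) / (N : ℝ)

/-- Generalized overlap `Q(σ⃗) = (1/N) Σ_k ψ(S_k(σ¹)+z_k,…,S_k(σⁿ)+z_k)`. -/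
def Qgen {n M N : ℕ} (ψ : (Fin n → ℝ) → ℝ) (G : Fin M → Fin N → ℝ) (z : Fin M → ℝ)
    (σv : Fin n → Fin N → ℝ) : ℝ :=
  (∑ k, ψ (fun ℓ => Sk G (σv ℓ) k + z k)) / (N : ℝ)

/-- Hamiltonian `X_{N,λ,η}` of the coupled replicas. -/
def Xgen {n M N : ℕ} (u : ℝ → ℝ) (φ ψ : (Fin n → ℝ) → ℝ) (h κ lam η : ℝ)
    (G : Fin M → Fin N → ℝ) (z : Fin M → ℝ) (σv : Fin n → Fin N → ℝ) : ℝ :=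
  (∑ ℓ, ∑ k, u (Sk G (σv ℓ) k + z k)) + h * (∑ ℓ, ∑ i, σv ℓ i) -
    κ * (∑ ℓ, ∑ i, (σv ℓ i) ^ 2) + lam * (N : ℝ) * Rgen φ σv + η * (N : ℝ) * Qgen ψ G z σv

/-- Partition function `Z_{N,λ,η}`. -/
def Zgen {n M N : ℕ} (u : ℝ → ℝ) (φ ψ : (Fin n → ℝ) → ℝ) (h κ lam η : ℝ)
    (G : Fin M → Fin N → ℝ) (z : Fin M → ℝ) : ℝ :=
  ∫ σv : Fin n → Fin N → ℝ, Real.exp (Xgen u φ ψ h κ lam η G z σv)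

/-- Gibbs expectation `⟨·⟩_{λ,η}`. -/
def gibbsGen {n M N : ℕ} (u : ℝ → ℝ) (φ ψ : (Fin n → ℝ) → ℝ) (h κ lam η : ℝ)
    (G : Fin M → Fin N → ℝ) (z : Fin M → ℝ) (f : (Fin n → Fin N → ℝ) → ℝ) : ℝ :=
  (∫ σv : Fin n → Fin N → ℝ, f σv * Real.exp (Xgen u φ ψ h κ lam η G z σv)) /
    Zgen u φ ψ h κ lam η G z

/-- Free energy `F_N(λ,η)`. -/
def Fgen {n M N : ℕ} (u : ℝ → ℝ) (φ ψ : (Fin n → ℝ) → ℝ) (h κ lam η : ℝ)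
    (G : Fin M → Fin N → ℝ) (z : Fin M → ℝ) : ℝ :=
  (1 / (N : ℝ)) * Real.log (Zgen (n := n) u φ ψ h κ lam η G z)

/-- Operator norm of an `M × N` matrix acting on Euclidean spaces. -/
def opNorm {M N : ℕ} (A : Fin M → Fin N → ℝ) : ℝ :=
  ‖(LinearMap.toContinuousLinearMap (Matrix.toEuclideanLin (Matrix.of A)))‖

/-- Growth conditions (G-1)–(G-3) on `u`, `φ`, `ψ`. -/
def Growth (n : ℕ) (u : ℝ → ℝ) (φ ψ : (Fin n → ℝ) → ℝ) (d η0 α : ℝ) : Prop :=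
  (∀ s, u s ≤ 0 ∧ -(d * (1 + s ^ 2)) ≤ u s) ∧
  (∀ s, |deriv u s| ≤ d * (1 + |s|)) ∧
  (∀ s s', |φ s - φ s'| ≤ d * (1 + vnorm s + vnorm s') * vnorm (s - s')) ∧
  (∀ s s', |ψ s - ψ s'| ≤ d * (1 + vnorm s + vnorm s') * vnorm (s - s')) ∧
  (∀ s, |φ s| ≤ d * (1 + (vnorm s) ^ 2)) ∧
  (∀ s, |ψ s| ≤ d * (1 + (vnorm s) ^ 2)) ∧
  ContDiff ℝ 2 φ ∧ ContDiff ℝ 2 ψ ∧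
  (∀ (s : Fin n → ℝ) (l l' : Fin n),
    |fderiv ℝ (fun y => fderiv ℝ φ y (Pi.single l' 1)) s (Pi.single l 1)| ≤ d) ∧
  (∀ (s : Fin n → ℝ) (l l' : Fin n),
    |fderiv ℝ (fun y => fderiv ℝ ψ y (Pi.single l' 1)) s (Pi.single l 1)| ≤ d) ∧
  (∀ y : Fin n → ℝ, (∑ ℓ, u (y ℓ)) + η0 * |ψ y| ≤ α * d)



/-! ### Auxiliary lemmas -/

lemma opNorm_nonneg' {M N : ℕ} (A : Fin M → Fin N → ℝ) : 0 ≤ opNorm A := norm_nonneg _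

lemma sum_sq_mulVec_le {M N : ℕ} (A : Fin M → Fin N → ℝ) (σ : Fin N → ℝ) :
    ∑ k, (∑ i, A k i * σ i) ^ 2 ≤ (opNorm A) ^ 2 * ∑ i, (σ i) ^ 2 := by
  set L := LinearMap.toContinuousLinearMap (Matrix.toEuclideanLin (Matrix.of A)) with hL
  set x : EuclideanSpace ℝ (Fin N) := (WithLp.equiv 2 (Fin N → ℝ)).symm σ with hx
  have h1 : ‖L x‖ ≤ ‖L‖ * ‖x‖ := L.le_opNorm x
  have hxn : ‖x‖ = Real.sqrt (∑ i, (σ i) ^ 2) := by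
    rw [EuclideanSpace.norm_eq]
    congr 1
    refine Finset.sum_congr rfl fun i _ => ?_
    simp [hx, sq_abs]
  have hLx : ‖L x‖ = Real.sqrt (∑ k, (∑ i, A k i * σ i) ^ 2) := by
    rw [EuclideanSpace.norm_eq]
    congr 1
    refine Finset.sum_congr rfl fun k _ => ?_
    have : L x k = ∑ i, A k i * σ i := by
      simp [hL, hx, Matrix.toEuclideanLin_apply, Matrix.mulVec, dotProduct]
    rw [this, Real.norm_eq_abs, sq_abs]
  rw [hxn, hLx] at h1
  have h2 : (Real.sqrt (∑ k, (∑ i, A k i * σ i) ^ 2)) ^ 2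
      ≤ (‖L‖ * Real.sqrt (∑ i, (σ i) ^ 2)) ^ 2 :=
    pow_le_pow_left₀ (Real.sqrt_nonneg _) h1 2
  rw [Real.sq_sqrt (by positivity), mul_pow, Real.sq_sqrt (by positivity)] at h2
  exact h2

lemma sum_sq_Sk_le {M N : ℕ} (G : Fin M → Fin N → ℝ) (σ : Fin N → ℝ) :
    ∑ k, (Sk G σ k) ^ 2 ≤ (opNorm (fun k i => G k i / Real.sqrt (N : ℝ))) ^ 2 * ∑ i, (σ i) ^ 2 := by
  have h : ∀ k, Sk G σ k = ∑ i, (G k i / Real.sqrt (N : ℝ)) * σ i := by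
    intro k
    rw [Sk, Finset.sum_div]
    exact Finset.sum_congr rfl fun i _ => by ring
  simp_rw [h]
  exact sum_sq_mulVec_le _ σ

lemma vnorm_sq {n : ℕ} (s : Fin n → ℝ) : (vnorm s) ^ 2 = ∑ ℓ, (s ℓ) ^ 2 :=
  Real.sq_sqrt (Finset.sum_nonneg fun _ _ => sq_nonneg _)

lemma sum_sum_add {a b : ℕ} (F H : Fin a → Fin b → ℝ) :
    ∑ ℓ, ∑ k, (F ℓ k + H ℓ k) = (∑ ℓ, ∑ k, F ℓ k) + ∑ ℓ, ∑ k, H ℓ k := by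
  simp [Finset.sum_add_distrib]

lemma sum_sum_const (a b : ℕ) (c : ℝ) :
    ∑ _ℓ : Fin a, ∑ _k : Fin b, c = (a : ℝ) * (b : ℝ) * c := by
  simp [Finset.sum_const, Finset.card_univ, nsmul_eq_mul]
  ring

lemma sum_sum_mul {a b : ℕ} (c : ℝ) (F : Fin a → Fin b → ℝ) :
    ∑ ℓ, ∑ k, c * F ℓ k = c * ∑ ℓ, ∑ k, F ℓ k := by
  simp_rw [← Finset.mul_sum]

set_option maxHeartbeats 2000000 in
/-- Lemma 4.2: there are `ε > 0` and `K ≥ 1` such that, a.s. in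
`(G,z)`, for `t, |λ|, |η| ≤ ε`,
`⟨exp(t‖σ⃗‖²)⟩_{λ,η} ≤ exp(KN(‖z̄‖² + ‖Ḡ‖_op² + 1 + h²))`. -/
theorem gibbs_exponential_moment
    (n : ℕ) (hn : 1 ≤ n) (α κ h Δs d η0 : ℝ)
    (hα : 0 < α) (hκ : 0 < κ) (hΔs : 0 ≤ Δs) (hd : 0 < d) (hη0 : 0 < η0)
    (u : ℝ → ℝ) (hdiff : Differentiable ℝ u)
    (φ ψ : (Fin n → ℝ) → ℝ) (hG : Growth n u φ ψ d η0 α) :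
    ∃ ε > 0, ∃ K ≥ (1 : ℝ), ∀ N : ℕ,
      ∀ᵐ gz ∂(disorder ⌊α * (N : ℝ)⌋₊ N Δs),
        ∀ t lam η : ℝ, t ≤ ε → |lam| ≤ ε → |η| ≤ ε →
          gibbsGen u φ ψ h κ lam η gz.1 gz.2
              (fun σv => Real.exp (t * (cnorm σv) ^ 2)) ≤
            Real.exp (K * (N : ℝ) * ((∑ k, (gz.2 k / Real.sqrt (N : ℝ)) ^ 2) +
              (opNorm (fun k i => gz.1 k i / Real.sqrt (N : ℝ))) ^ 2 + 1 + h ^ 2)) := by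
  obtain ⟨hu0, -, -, -, hφg, hψg, hφC, hψC, -, -, hG3⟩ := hG
  have hucont : Continuous u := hdiff.continuous
  have hφcont : Continuous φ := hφC.continuous
  have hψcont : Continuous ψ := hψC.continuous
  set ε : ℝ := min (min η0 1) (κ / (8 * (d + 1))) with hε_def
  have hεpos : 0 < ε := lt_min (lt_min hη0 one_pos) (by positivity)
  have hεη0 : ε ≤ η0 := (min_le_left _ _).trans (min_le_left _ _)
  have hε1 : ε ≤ 1 := (min_le_left _ _).trans (min_le_right _ _)
  have hεd8 : ε * (d + 1) ≤ κ / 8 := by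
    have h1 : ε ≤ κ / (8 * (d + 1)) := min_le_right _ _
    calc ε * (d + 1) ≤ (κ / (8 * (d + 1))) * (d + 1) :=
          mul_le_mul_of_nonneg_right h1 (by positivity)
      _ = κ / 8 := by field_simp
  have hεd : ε * d ≤ κ / 8 := by linarith only [hεd8, hεpos]
  have hεκ : ε ≤ κ / 8 := by linarith only [hεd8, mul_nonneg hεpos.le hd.le]
  clear_value ε
  set c0 : ℝ := Real.sqrt (π / (κ / 2)) with hc0_def
  have hc0pos : 0 < c0 := Real.sqrt_pos.2 (by positivity)
  clear_value c0
  set C1 : ℝ := α ^ 2 * d + κ + n / κ with hC1_def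
  set C2 : ℝ := d * n * α + d * (1 + n) + d * α + κ * n + 8 * d * n + n + 1 with hC2_def
  have hC1nn : 0 ≤ C1 := by rw [hC1_def]; positivity
  have hC2nn : 0 ≤ C2 := by rw [hC2_def]; positivity
  clear_value C1 C2
  set K : ℝ := C1 + C2 + n * |Real.log c0| + 1 with hK_def
  have hK1 : (1 : ℝ) ≤ K := by
    have h0 : (0:ℝ) ≤ n * |Real.log c0| := by positivity
    rw [hK_def]; linarith only [h0, hC1nn, hC2nn]
  clear_value K
  refine ⟨ε, hεpos, K, hK1, fun N => ?_⟩
  apply Filter.Eventually.of_forall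
  rintro ⟨G, z⟩ t lam η ht hlam hη
  dsimp only
  rcases Nat.eq_zero_or_pos N with hN0 | hNpos
  · subst hN0
    haveI hempty : IsEmpty (Fin ⌊α * ((0:ℕ) : ℝ)⌋₊) := by
      rw [show ⌊α * ((0:ℕ) : ℝ)⌋₊ = 0 by simp]
      infer_instance
    have hX0 : ∀ σv : Fin n → Fin 0 → ℝ, Xgen u φ ψ h κ lam η G z σv = 0 := by
      intro σv
      simp [Xgen, Rgen, Qgen, Finset.univ_eq_empty]
    have hcn0 : ∀ σv : Fin n → Fin 0 → ℝ, cnorm σv = 0 := by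
      intro σv; simp [cnorm]
    have hone : (∫ _σv : Fin n → Fin 0 → ℝ, (1:ℝ)) = 1 := by
      rw [integral_const]
      have hv : (volume (Set.univ : Set (Fin n → Fin 0 → ℝ))) = 1 := by
        rw [volume_pi, Measure.pi_univ]
        have h2 : (volume (Set.univ : Set (Fin 0 → ℝ))) = 1 := by
          rw [volume_pi, Measure.pi_univ]; simp
        simp [h2]
      simp [measureReal_def, hv]
    have hnum : (∫ σv : Fin n → Fin 0 → ℝ,
        Real.exp (t * (cnorm σv) ^ 2) * Real.exp (Xgen u φ ψ h κ lam η G z σv)) = 1 := by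
      have hfun : (fun σv : Fin n → Fin 0 → ℝ =>
          Real.exp (t * (cnorm σv) ^ 2) * Real.exp (Xgen u φ ψ h κ lam η G z σv))
          = fun _ => (1:ℝ) := by
        funext σv
        rw [hX0, hcn0]
        simp
      rw [hfun, hone]
    have hZ1 : Zgen u φ ψ h κ lam η G z = (1:ℝ) := by
      have hfun : (fun σv : Fin n → Fin 0 → ℝ =>
          Real.exp (Xgen u φ ψ h κ lam η G z σv)) = fun _ => (1:ℝ) := by
        funext σv
        rw [hX0]
        simp
      rw [Zgen, hfun, hone]
    simp only [gibbsGen]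
    rw [hnum, hZ1]
    simp
  · have hNne : ((N:ℝ)) ≠ 0 := Nat.cast_ne_zero.2 hNpos.ne'
    have hNnn : (0:ℝ) ≤ N := Nat.cast_nonneg N
    have hnnn : (0:ℝ) ≤ n := Nat.cast_nonneg n
    set B : ℝ := opNorm (fun k i => G k i / Real.sqrt (N:ℝ)) with hB_def
    set zbar : ℝ := ∑ k, (z k / Real.sqrt (N:ℝ)) ^ 2 with hzbar_def
    set E : ℝ := zbar + B ^ 2 + 1 + h ^ 2 with hE_def
    clear_value E
    have hBnn : 0 ≤ B := opNorm_nonneg' _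
    have hzbarnn : 0 ≤ zbar := Finset.sum_nonneg fun _ _ => sq_nonneg _
    clear_value B zbar
    have hBsq : (0:ℝ) ≤ B ^ 2 := sq_nonneg B
    have hhsq : (0:ℝ) ≤ h ^ 2 := sq_nonneg h
    have hE1 : 1 ≤ E := by rw [hE_def]; linarith only [hzbarnn, hBsq, hhsq]
    have hEh : 1 + h ^ 2 ≤ E := by rw [hE_def]; linarith only [hzbarnn, hBsq]
    have hEB : B ^ 2 ≤ E := by rw [hE_def]; linarith only [hzbarnn, hhsq]
    have hEz : zbar ≤ E := by rw [hE_def]; linarith only [hBsq, hhsq]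
    have hEnn : (0:ℝ) ≤ E := by linarith only [hE1]
    have hMle : ((⌊α * (N:ℝ)⌋₊ : ℕ) : ℝ) ≤ α * N := Nat.floor_le (by positivity)
    have hMnn : (0:ℝ) ≤ ((⌊α * (N:ℝ)⌋₊ : ℕ) : ℝ) := Nat.cast_nonneg _
    have hXeq : ∀ σv : Fin n → Fin N → ℝ, Xgen u φ ψ h κ lam η G z σv =
        (∑ ℓ, ∑ k, u (Sk G (σv ℓ) k + z k)) + h * (∑ ℓ, ∑ i, σv ℓ i)
          - κ * (∑ ℓ, ∑ i, (σv ℓ i) ^ 2)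
          + lam * (∑ i, φ (fun ℓ => σv ℓ i))
          + η * (∑ k, ψ (fun ℓ => Sk G (σv ℓ) k + z k)) := by
      intro σv
      have e1 : lam * (N:ℝ) * Rgen φ σv = lam * ∑ i, φ (fun ℓ => σv ℓ i) := by
        simp only [Rgen]
        field_simp
      have e2 : η * (N:ℝ) * Qgen ψ G z σv
          = η * ∑ k, ψ (fun ℓ => Sk G (σv ℓ) k + z k) := by
        simp only [Qgen]
        field_simp
      simp only [Xgen]
      rw [e1, e2]
    -- reusable bounds for φ and ψ sums
    have hφbound : ∀ σv : Fin n → Fin N → ℝ,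
        |∑ i, φ (fun ℓ => σv ℓ i)| ≤ d * ((N:ℝ) + ∑ ℓ, ∑ i, (σv ℓ i) ^ 2) := by
      intro σv
      calc |∑ i, φ (fun ℓ => σv ℓ i)| ≤ ∑ i, |φ (fun ℓ => σv ℓ i)| :=
          Finset.abs_sum_le_sum_abs _ _
        _ ≤ ∑ i, d * (1 + ∑ ℓ, (σv ℓ i) ^ 2) := by
            refine Finset.sum_le_sum fun i _ => ?_
            have hb := hφg (fun ℓ => σv ℓ i)
            rwa [vnorm_sq] at hb
        _ = d * ((N:ℝ) + ∑ i, ∑ ℓ, (σv ℓ i) ^ 2) := by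
            simp only [mul_add, mul_one, Finset.sum_add_distrib, Finset.sum_const,
              Finset.card_univ, Fintype.card_fin, nsmul_eq_mul, Finset.mul_sum]
            ring
        _ = d * ((N:ℝ) + ∑ ℓ, ∑ i, (σv ℓ i) ^ 2) := by rw [Finset.sum_comm]
    have hψbound : ∀ σv : Fin n → Fin N → ℝ,
        |∑ k, ψ (fun ℓ => Sk G (σv ℓ) k + z k)|
          ≤ d * (((⌊α * (N:ℝ)⌋₊ : ℕ) : ℝ) + ∑ ℓ, ∑ k, (Sk G (σv ℓ) k + z k) ^ 2) := by
      intro σv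
      calc |∑ k, ψ (fun ℓ => Sk G (σv ℓ) k + z k)|
          ≤ ∑ k, |ψ (fun ℓ => Sk G (σv ℓ) k + z k)| := Finset.abs_sum_le_sum_abs _ _
        _ ≤ ∑ k, d * (1 + ∑ ℓ, (Sk G (σv ℓ) k + z k) ^ 2) := by
            refine Finset.sum_le_sum fun k _ => ?_
            have hb := hψg (fun ℓ => Sk G (σv ℓ) k + z k)
            rwa [vnorm_sq] at hb
        _ = d * (((⌊α * (N:ℝ)⌋₊ : ℕ) : ℝ) + ∑ k, ∑ ℓ, (Sk G (σv ℓ) k + z k) ^ 2) := by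
            simp only [mul_add, mul_one, Finset.sum_add_distrib, Finset.sum_const,
              Finset.card_univ, Fintype.card_fin, nsmul_eq_mul, Finset.mul_sum]
            ring
        _ = d * (((⌊α * (N:ℝ)⌋₊ : ℕ) : ℝ) + ∑ ℓ, ∑ k, (Sk G (σv ℓ) k + z k) ^ 2) := by rw [Finset.sum_comm]
    -- pointwise upper bound
    have hhx : ∀ x : ℝ, h * x ≤ h ^ 2 / κ + κ / 4 * x ^ 2 := by
      intro x
      rw [← sub_nonneg]
      have e : h ^ 2 / κ + κ / 4 * x ^ 2 - h * x = (κ * x - 2 * h) ^ 2 / (4 * κ) := by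
        field_simp
        ring
      rw [e]
      positivity
    have hXup : ∀ t' : ℝ, t' ≤ ε → ∀ σv : Fin n → Fin N → ℝ,
        t' * (cnorm σv) ^ 2 + Xgen u φ ψ h κ lam η G z σv
          ≤ (N:ℝ) * C1 * (1 + h ^ 2) - κ / 2 * ∑ ℓ, ∑ i, (σv ℓ i) ^ 2 := by
      intro t' ht' σv
      have hSnn : (0:ℝ) ≤ ∑ ℓ, ∑ i, (σv ℓ i) ^ 2 := by positivity
      have hcn : (cnorm σv) ^ 2 = ∑ ℓ, ∑ i, (σv ℓ i) ^ 2 := Real.sq_sqrt hSnn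
      simp only [cnorm]
      rw [Real.sq_sqrt hSnn, hXeq σv]
      set S := ∑ ℓ, ∑ i, (σv ℓ i) ^ 2 with hS_def
      clear_value S
      have h1 : (∑ ℓ, ∑ k, u (Sk G (σv ℓ) k + z k))
          + η * (∑ k, ψ (fun ℓ => Sk G (σv ℓ) k + z k)) ≤ ((⌊α * (N:ℝ)⌋₊ : ℕ) : ℝ) * (α * d) := by
        rw [Finset.sum_comm, Finset.mul_sum, ← Finset.sum_add_distrib]
        calc ∑ k, ((∑ ℓ, u (Sk G (σv ℓ) k + z k))
              + η * ψ (fun ℓ => Sk G (σv ℓ) k + z k))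
            ≤ ∑ _k : Fin (⌊α * (N:ℝ)⌋₊), α * d := by
              refine Finset.sum_le_sum fun k _ => ?_
              have h3 := hG3 (fun ℓ => Sk G (σv ℓ) k + z k)
              have h4 : η * ψ (fun ℓ => Sk G (σv ℓ) k + z k)
                  ≤ η0 * |ψ (fun ℓ => Sk G (σv ℓ) k + z k)| := by
                calc η * ψ (fun ℓ => Sk G (σv ℓ) k + z k)
                    ≤ |η * ψ (fun ℓ => Sk G (σv ℓ) k + z k)| := le_abs_self _
                  _ = |η| * |ψ (fun ℓ => Sk G (σv ℓ) k + z k)| := abs_mul _ _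
                  _ ≤ η0 * |ψ (fun ℓ => Sk G (σv ℓ) k + z k)| :=
                      mul_le_mul_of_nonneg_right (hη.trans hεη0) (abs_nonneg _)
              linarith only [h3, h4]
          _ = ((⌊α * (N:ℝ)⌋₊ : ℕ) : ℝ) * (α * d) := by
              rw [Finset.sum_const, Finset.card_univ, Fintype.card_fin, nsmul_eq_mul]
      have h2 : lam * (∑ i, φ (fun ℓ => σv ℓ i)) ≤ ε * (d * ((N:ℝ) + S)) := by
        have hb : |∑ i, φ (fun ℓ => σv ℓ i)| ≤ d * ((N:ℝ) + S) := by
          rw [hS_def]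
          exact hφbound σv
        calc lam * (∑ i, φ (fun ℓ => σv ℓ i))
            ≤ |lam * (∑ i, φ (fun ℓ => σv ℓ i))| := le_abs_self _
          _ = |lam| * |∑ i, φ (fun ℓ => σv ℓ i)| := abs_mul _ _
          _ ≤ ε * (d * ((N:ℝ) + S)) :=
              mul_le_mul hlam hb (abs_nonneg _) hεpos.le
      have h3 : h * (∑ ℓ, ∑ i, σv ℓ i) ≤ (n:ℝ) * (N:ℝ) * (h ^ 2 / κ) + κ / 4 * S := by
        calc h * (∑ ℓ, ∑ i, σv ℓ i) = ∑ ℓ, ∑ i, h * σv ℓ i := by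
              rw [Finset.mul_sum]
              exact Finset.sum_congr rfl fun ℓ _ => Finset.mul_sum _ _ _
          _ ≤ ∑ ℓ, ∑ i, (h ^ 2 / κ + κ / 4 * (σv ℓ i) ^ 2) :=
              Finset.sum_le_sum fun ℓ _ => Finset.sum_le_sum fun i _ => hhx _
          _ = (n:ℝ) * (N:ℝ) * (h ^ 2 / κ) + κ / 4 * S := by
              simp only [Finset.sum_add_distrib, Finset.sum_const, Finset.card_univ,
                Fintype.card_fin, nsmul_eq_mul, ← Finset.mul_sum, hS_def]
              ring
      have hεtS : t' * S ≤ κ / 8 * S := mul_le_mul_of_nonneg_right (ht'.trans hεκ) hSnn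
      have h2' : ε * (d * ((N:ℝ) + S)) ≤ κ / 8 * (N:ℝ) + κ / 8 * S := by
        have a1 : ε * d * (N:ℝ) ≤ κ / 8 * (N:ℝ) := mul_le_mul_of_nonneg_right hεd hNnn
        have a2 : ε * d * S ≤ κ / 8 * S := mul_le_mul_of_nonneg_right hεd hSnn
        linarith only [a1, a2]
      have hMα : ((⌊α * (N:ℝ)⌋₊ : ℕ) : ℝ) * (α * d) ≤ α ^ 2 * d * (N:ℝ) := by
        have b1 : ((⌊α * (N:ℝ)⌋₊ : ℕ) : ℝ) * (α * d) ≤ (α * (N:ℝ)) * (α * d) :=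
          mul_le_mul_of_nonneg_right hMle (mul_nonneg hα.le hd.le)
        linarith only [b1]
      have hfin : α ^ 2 * d * (N:ℝ) + κ / 8 * (N:ℝ) + (n:ℝ) * (N:ℝ) * (h ^ 2 / κ)
          ≤ (N:ℝ) * C1 * (1 + h ^ 2) := by
        have expand : (N:ℝ) * C1 * (1 + h ^ 2)
            - (α ^ 2 * d * (N:ℝ) + κ / 8 * (N:ℝ) + (n:ℝ) * (N:ℝ) * (h ^ 2 / κ))
            = (N:ℝ) * (α ^ 2 * d * h ^ 2 + 7 / 8 * κ + κ * h ^ 2 + (n:ℝ) / κ) := by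
          rw [hC1_def]
          field_simp
          ring
        have h9 : 0 ≤ (N:ℝ) * (α ^ 2 * d * h ^ 2 + 7 / 8 * κ + κ * h ^ 2 + (n:ℝ) / κ) := by
          positivity
        linarith only [expand, h9]
      linarith only [h1, h2, h3, hεtS, h2', hMα, hfin]
    -- the cube
    set Cb := (Set.univ.pi fun _ : Fin n => Set.univ.pi fun _ : Fin N => Set.Icc (0:ℝ) 1)
      with hCb_def
    have hCbmeas : MeasurableSet Cb :=
      MeasurableSet.univ_pi fun _ => MeasurableSet.univ_pi fun _ => measurableSet_Icc
    clear_value Cb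
    have hCbvol : volume Cb = 1 := by
      have hin : (volume (Set.univ.pi fun _ : Fin N => Set.Icc (0:ℝ) 1)) = 1 := by
        rw [volume_pi, Measure.pi_pi]
        simp [Real.volume_Icc]
      rw [hCb_def, volume_pi, Measure.pi_pi, Finset.prod_const, hin, one_pow]
    have hzsq : ∑ k, (z k) ^ 2 = (N:ℝ) * zbar := by
      rw [hzbar_def, Finset.mul_sum]
      refine Finset.sum_congr rfl fun k _ => ?_
      rw [div_pow, Real.sq_sqrt hNnn]
      field_simp
    -- pointwise lower bound on the cube
    have hXlow : ∀ σv ∈ Cb, -((N:ℝ) * C2 * E) ≤ Xgen u φ ψ h κ lam η G z σv := by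
      intro σv hσ
      rw [hCb_def] at hσ
      have hσ' : ∀ ℓ i, 0 ≤ σv ℓ i ∧ σv ℓ i ≤ 1 := by
        intro ℓ i
        have h5 : σv ℓ ∈ Set.univ.pi fun _ : Fin N => Set.Icc (0:ℝ) 1 :=
          hσ ℓ (Set.mem_univ ℓ)
        have h6 : σv ℓ i ∈ Set.Icc (0:ℝ) 1 := h5 i (Set.mem_univ i)
        exact ⟨h6.1, h6.2⟩
      rw [hXeq σv]
      set S := ∑ ℓ, ∑ i, (σv ℓ i) ^ 2 with hS_def
      clear_value S
      have hSnn : (0:ℝ) ≤ S := by rw [hS_def]; positivity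
      have hSle : S ≤ (n:ℝ) * (N:ℝ) := by
        rw [hS_def]
        calc ∑ ℓ, ∑ i, (σv ℓ i) ^ 2 ≤ ∑ _ℓ : Fin n, ∑ _i : Fin N, (1:ℝ) := by
              refine Finset.sum_le_sum fun ℓ _ => Finset.sum_le_sum fun i _ => ?_
              nlinarith only [(hσ' ℓ i).1, (hσ' ℓ i).2]
          _ = (n:ℝ) * (N:ℝ) := by rw [sum_sum_const, mul_one]
      have hTnn : (0:ℝ) ≤ ∑ ℓ, ∑ i, σv ℓ i :=
        Finset.sum_nonneg fun ℓ _ => Finset.sum_nonneg fun i _ => (hσ' ℓ i).1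
      have hTle : (∑ ℓ, ∑ i, σv ℓ i) ≤ (n:ℝ) * (N:ℝ) := by
        calc (∑ ℓ, ∑ i, σv ℓ i) ≤ ∑ _ℓ : Fin n, ∑ _i : Fin N, (1:ℝ) :=
            Finset.sum_le_sum fun ℓ _ => Finset.sum_le_sum fun i _ => (hσ' ℓ i).2
          _ = (n:ℝ) * (N:ℝ) := by rw [sum_sum_const, mul_one]
      set Y := ∑ ℓ, ∑ k, (Sk G (σv ℓ) k + z k) ^ 2 with hY_def
      clear_value Y
      have hYnn : (0:ℝ) ≤ Y := by rw [hY_def]; positivity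
      have hYb : Y ≤ 2 * B ^ 2 * S + 2 * (n:ℝ) * ((N:ℝ) * zbar) := by
        have hperl : ∀ ℓ, ∑ k, (Sk G (σv ℓ) k + z k) ^ 2
            ≤ 2 * B ^ 2 * (∑ i, (σv ℓ i) ^ 2) + 2 * ∑ k, (z k) ^ 2 := by
          intro ℓ
          have hstep : ∀ k : Fin (⌊α * (N:ℝ)⌋₊), (Sk G (σv ℓ) k + z k) ^ 2
              ≤ 2 * (Sk G (σv ℓ) k) ^ 2 + 2 * (z k) ^ 2 := fun k => by
            nlinarith only [sq_nonneg (Sk G (σv ℓ) k - z k)]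
          calc ∑ k, (Sk G (σv ℓ) k + z k) ^ 2
              ≤ ∑ k, (2 * (Sk G (σv ℓ) k) ^ 2 + 2 * (z k) ^ 2) :=
                Finset.sum_le_sum fun k _ => hstep k
            _ = 2 * (∑ k, (Sk G (σv ℓ) k) ^ 2) + 2 * ∑ k, (z k) ^ 2 := by
                rw [Finset.sum_add_distrib, ← Finset.mul_sum, ← Finset.mul_sum]
            _ ≤ 2 * (B ^ 2 * ∑ i, (σv ℓ i) ^ 2) + 2 * ∑ k, (z k) ^ 2 := by
                have h7 : (∑ k, (Sk G (σv ℓ) k) ^ 2) ≤ B ^ 2 * ∑ i, (σv ℓ i) ^ 2 := by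
                  rw [hB_def]
                  exact sum_sq_Sk_le G (σv ℓ)
                linarith only [h7]
            _ = 2 * B ^ 2 * (∑ i, (σv ℓ i) ^ 2) + 2 * ∑ k, (z k) ^ 2 := by ring
        calc Y ≤ ∑ ℓ : Fin n, (2 * B ^ 2 * (∑ i, (σv ℓ i) ^ 2) + 2 * ∑ k, (z k) ^ 2) := by
              rw [hY_def]
              exact Finset.sum_le_sum fun ℓ _ => hperl ℓ
          _ = 2 * B ^ 2 * S + (n:ℝ) * (2 * ∑ k, (z k) ^ 2) := by
              rw [Finset.sum_add_distrib, ← Finset.mul_sum, Finset.sum_const,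
                Finset.card_univ, Fintype.card_fin, nsmul_eq_mul, hS_def]
          _ = 2 * B ^ 2 * S + 2 * (n:ℝ) * ((N:ℝ) * zbar) := by rw [hzsq]; ring
      have hU : -(d * ((n:ℝ) * ((⌊α * (N:ℝ)⌋₊ : ℕ) : ℝ)) + d * Y) ≤ ∑ ℓ, ∑ k, u (Sk G (σv ℓ) k + z k) := by
        have hterm : ∀ ℓ (k : Fin (⌊α * (N:ℝ)⌋₊)),
            -d + -(d * (Sk G (σv ℓ) k + z k) ^ 2) ≤ u (Sk G (σv ℓ) k + z k) := by
          intro ℓ k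
          have hb := (hu0 (Sk G (σv ℓ) k + z k)).2
          linarith only [hb]
        have heval : ∑ ℓ : Fin n, ∑ k : Fin (⌊α * (N:ℝ)⌋₊),
            (-d + -(d * (Sk G (σv ℓ) k + z k) ^ 2))
            = -(d * ((n:ℝ) * ((⌊α * (N:ℝ)⌋₊ : ℕ) : ℝ)) + d * Y) := by
          simp only [Finset.sum_add_distrib, Finset.sum_neg_distrib, Finset.sum_const,
            Finset.card_univ, Fintype.card_fin, nsmul_eq_mul, ← Finset.mul_sum, hY_def]
          ring
        calc -(d * ((n:ℝ) * ((⌊α * (N:ℝ)⌋₊ : ℕ) : ℝ)) + d * Y)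
            = ∑ ℓ : Fin n, ∑ k : Fin (⌊α * (N:ℝ)⌋₊), (-d + -(d * (Sk G (σv ℓ) k + z k) ^ 2)) := heval.symm
          _ ≤ ∑ ℓ, ∑ k, u (Sk G (σv ℓ) k + z k) :=
            Finset.sum_le_sum fun ℓ _ => Finset.sum_le_sum fun k _ => hterm ℓ k
      have habsh : |h| ≤ (1 + h ^ 2) / 2 := by
        nlinarith only [sq_nonneg (|h| - 1), sq_abs h, abs_nonneg h]
      have hTlow : -((1 + h ^ 2) / 2 * ((n:ℝ) * (N:ℝ))) ≤ h * (∑ ℓ, ∑ i, σv ℓ i) := by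
        have e1 : 0 ≤ (h + |h|) * (∑ ℓ, ∑ i, σv ℓ i) :=
          mul_nonneg (by linarith [neg_abs_le h]) hTnn
        have e2 : |h| * (∑ ℓ, ∑ i, σv ℓ i) ≤ (1 + h ^ 2) / 2 * ((n:ℝ) * (N:ℝ)) := by
          calc |h| * (∑ ℓ, ∑ i, σv ℓ i) ≤ |h| * ((n:ℝ) * (N:ℝ)) :=
              mul_le_mul_of_nonneg_left hTle (abs_nonneg h)
            _ ≤ (1 + h ^ 2) / 2 * ((n:ℝ) * (N:ℝ)) :=
              mul_le_mul_of_nonneg_right habsh (by positivity)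
        linarith only [e1, e2]
      have hκS : κ * S ≤ κ * ((n:ℝ) * (N:ℝ)) := mul_le_mul_of_nonneg_left hSle hκ.le
      have hφlow : -(d * ((N:ℝ) + S)) ≤ lam * (∑ i, φ (fun ℓ => σv ℓ i)) := by
        have e3 : |lam * ∑ i, φ (fun ℓ => σv ℓ i)| ≤ d * ((N:ℝ) + S) := by
          have hbS : |∑ i, φ (fun ℓ => σv ℓ i)| ≤ d * ((N:ℝ) + S) := by
            rw [hS_def]
            exact hφbound σv
          rw [abs_mul]
          calc |lam| * |∑ i, φ (fun ℓ => σv ℓ i)| ≤ 1 * (d * ((N:ℝ) + S)) :=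
              mul_le_mul (hlam.trans hε1) hbS (abs_nonneg _) zero_le_one
            _ = d * ((N:ℝ) + S) := one_mul _
        linarith only [neg_abs_le (lam * ∑ i, φ (fun ℓ => σv ℓ i)), e3]
      have hψlow : -(d * (((⌊α * (N:ℝ)⌋₊ : ℕ) : ℝ) + Y)) ≤ η * (∑ k, ψ (fun ℓ => Sk G (σv ℓ) k + z k)) := by
        have e3 : |η * ∑ k, ψ (fun ℓ => Sk G (σv ℓ) k + z k)| ≤ d * (((⌊α * (N:ℝ)⌋₊ : ℕ) : ℝ) + Y) := by
          rw [abs_mul]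
          have hbY : |∑ k, ψ (fun ℓ => Sk G (σv ℓ) k + z k)|
              ≤ d * (((⌊α * (N:ℝ)⌋₊ : ℕ) : ℝ) + Y) := by
            rw [hY_def]
            exact hψbound σv
          calc |η| * |∑ k, ψ (fun ℓ => Sk G (σv ℓ) k + z k)|
              ≤ 1 * (d * (((⌊α * (N:ℝ)⌋₊ : ℕ) : ℝ) + Y)) :=
                mul_le_mul (hη.trans hε1) hbY (abs_nonneg _) zero_le_one
            _ = d * (((⌊α * (N:ℝ)⌋₊ : ℕ) : ℝ) + Y) := one_mul _
        linarith only [neg_abs_le (η * ∑ k, ψ (fun ℓ => Sk G (σv ℓ) k + z k)), e3]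
      set P := (N:ℝ) * E with hP_def
      clear_value P
      have hPnn : 0 ≤ P := by rw [hP_def]; positivity
      have hNP : (N:ℝ) ≤ P := by
        rw [hP_def]
        exact le_mul_of_one_le_right hNnn hE1
      have hMP : ((⌊α * (N:ℝ)⌋₊ : ℕ) : ℝ) ≤ α * P := hMle.trans (mul_le_mul_of_nonneg_left hNP hα.le)
      have hSP : S ≤ (n:ℝ) * P := hSle.trans (mul_le_mul_of_nonneg_left hNP hnnn)
      have hYP : Y ≤ 4 * (n:ℝ) * P := by
        have hBS : B ^ 2 * S ≤ E * ((n:ℝ) * (N:ℝ)) := by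
          calc B ^ 2 * S ≤ B ^ 2 * ((n:ℝ) * (N:ℝ)) :=
              mul_le_mul_of_nonneg_left hSle (sq_nonneg B)
            _ ≤ E * ((n:ℝ) * (N:ℝ)) :=
              mul_le_mul_of_nonneg_right hEB (by positivity)
        have hzE : 2 * (n:ℝ) * ((N:ℝ) * zbar) ≤ 2 * (n:ℝ) * ((N:ℝ) * E) :=
          mul_le_mul_of_nonneg_left (mul_le_mul_of_nonneg_left hEz hNnn) (by positivity)
        rw [hP_def]
        linarith only [hYb, hBS, hzE]
      have hfin2 : d * ((n:ℝ) * ((⌊α * (N:ℝ)⌋₊ : ℕ) : ℝ)) + d * Y + (1 + h ^ 2) / 2 * ((n:ℝ) * (N:ℝ))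
          + κ * ((n:ℝ) * (N:ℝ)) + d * ((N:ℝ) + S) + d * (((⌊α * (N:ℝ)⌋₊ : ℕ) : ℝ) + Y)
          ≤ (N:ℝ) * C2 * E := by
        have c1 : d * ((n:ℝ) * ((⌊α * (N:ℝ)⌋₊ : ℕ) : ℝ)) ≤ d * ((n:ℝ) * (α * P)) :=
          mul_le_mul_of_nonneg_left (mul_le_mul_of_nonneg_left hMP hnnn) hd.le
        have c2 : d * Y ≤ d * (4 * (n:ℝ) * P) := mul_le_mul_of_nonneg_left hYP hd.le
        have c3 : (1 + h ^ 2) / 2 * ((n:ℝ) * (N:ℝ)) ≤ (n:ℝ) * P := by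
          have e4 : (1 + h ^ 2) / 2 ≤ E := by linarith only [hEh, sq_nonneg h]
          calc (1 + h ^ 2) / 2 * ((n:ℝ) * (N:ℝ)) ≤ E * ((n:ℝ) * (N:ℝ)) :=
              mul_le_mul_of_nonneg_right e4 (by positivity)
            _ = (n:ℝ) * ((N:ℝ) * E) := by ring
            _ = (n:ℝ) * P := by rw [hP_def]
        have c4 : κ * ((n:ℝ) * (N:ℝ)) ≤ κ * ((n:ℝ) * P) :=
          mul_le_mul_of_nonneg_left (mul_le_mul_of_nonneg_left hNP hnnn) hκ.le
        have c5 : d * ((N:ℝ) + S) ≤ d * (P + (n:ℝ) * P) :=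
          mul_le_mul_of_nonneg_left (by linarith only [hNP, hSP]) hd.le
        have c6 : d * (((⌊α * (N:ℝ)⌋₊ : ℕ) : ℝ) + Y) ≤ d * (α * P + 4 * (n:ℝ) * P) :=
          mul_le_mul_of_nonneg_left (by linarith only [hMP, hYP]) hd.le
        have hPC2 : (N:ℝ) * C2 * E = C2 * P := by rw [hP_def]; ring
        rw [hPC2, hC2_def]
        linarith only [c1, c2, c3, c4, c5, c6, hPnn]
      linarith only [hU, hTlow, hκS, hφlow, hψlow, hfin2]
    -- continuity
    have hXcont : Continuous (fun σv : Fin n → Fin N → ℝ => Xgen u φ ψ h κ lam η G z σv) := by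
      unfold Xgen Rgen Qgen Sk
      fun_prop
    -- gaussian integrals
    have hgauss_int : Integrable (fun σv : Fin n → Fin N → ℝ =>
        ∏ ℓ, ∏ i, Real.exp (-(κ / 2) * (σv ℓ i) ^ 2)) := by
      have inner : Integrable (fun v : Fin N → ℝ => ∏ i, Real.exp (-(κ / 2) * (v i) ^ 2)) :=
        Integrable.fintype_prod (fun _ => integrable_exp_neg_mul_sq (by positivity))
      exact Integrable.fintype_prod
        (f := fun _ : Fin n => fun v : Fin N → ℝ => ∏ i, Real.exp (-(κ / 2) * (v i) ^ 2))
        (fun _ => inner)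
    have hgauss_eval : (∫ σv : Fin n → Fin N → ℝ,
        ∏ ℓ, ∏ i, Real.exp (-(κ / 2) * (σv ℓ i) ^ 2)) = c0 ^ (N * n) := by
      rw [integral_fintype_prod_volume_eq_pow (ι := Fin n)
          (fun v : Fin N → ℝ => ∏ i, Real.exp (-(κ / 2) * (v i) ^ 2)),
        integral_fintype_prod_volume_eq_pow (ι := Fin N) (fun x : ℝ => Real.exp (-(κ / 2) * x ^ 2)),
        integral_gaussian]
      rw [hc0_def]
      simp [Fintype.card_fin, ← pow_mul]
    have hprod_exp : ∀ σv : Fin n → Fin N → ℝ,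
        (∏ ℓ, ∏ i, Real.exp (-(κ / 2) * (σv ℓ i) ^ 2))
          = Real.exp (-(κ / 2) * ∑ ℓ, ∑ i, (σv ℓ i) ^ 2) := by
      intro σv
      have hl : ∀ ℓ : Fin n, (∏ i, Real.exp (-(κ / 2) * (σv ℓ i) ^ 2))
          = Real.exp (∑ i, -(κ / 2) * (σv ℓ i) ^ 2) := fun ℓ => (Real.exp_sum _ _).symm
      rw [Finset.prod_congr rfl fun ℓ _ => hl ℓ, ← Real.exp_sum]
      congr 1
      simp_rw [← Finset.mul_sum]
    -- domination
    have hdom : ∀ t' : ℝ, t' ≤ ε → ∀ σv : Fin n → Fin N → ℝ,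
        Real.exp (t' * (cnorm σv) ^ 2) * Real.exp (Xgen u φ ψ h κ lam η G z σv)
          ≤ Real.exp ((N:ℝ) * C1 * (1 + h ^ 2))
            * ∏ ℓ, ∏ i, Real.exp (-(κ / 2) * (σv ℓ i) ^ 2) := by
      intro t' ht' σv
      rw [← Real.exp_add, hprod_exp σv, ← Real.exp_add]
      apply Real.exp_le_exp.2
      have hb := hXup t' ht' σv
      linarith only [hb]
    have hXint : Integrable (fun σv : Fin n → Fin N → ℝ =>
        Real.exp (Xgen u φ ψ h κ lam η G z σv)) := by
      apply Integrable.mono' (hgauss_int.const_mul (Real.exp ((N:ℝ) * C1 * (1 + h ^ 2))))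
        (hXcont.rexp).aestronglyMeasurable
      apply Filter.Eventually.of_forall
      intro σv
      rw [Real.norm_eq_abs, abs_of_pos (Real.exp_pos _)]
      have h10 := hdom 0 hεpos.le σv
      simpa using h10
    set c : ℝ := Real.exp (-((N:ℝ) * C2 * E)) with hc_def
    have hcpos : 0 < c := Real.exp_pos _
    clear_value c
    have hZlow : c ≤ Zgen u φ ψ h κ lam η G z := by
      have hind : Integrable (Cb.indicator fun _ : Fin n → Fin N → ℝ => c) := by
        rw [integrable_indicator_iff hCbmeas]
        exact integrableOn_const (by rw [hCbvol]; exact ENNReal.one_ne_top)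
      have hle : ∀ σv, (Cb.indicator fun _ => c) σv
          ≤ Real.exp (Xgen u φ ψ h κ lam η G z σv) := by
        intro σv
        by_cases hσ : σv ∈ Cb
        · rw [Set.indicator_of_mem hσ, hc_def]
          exact Real.exp_le_exp.2 (hXlow σv hσ)
        · rw [Set.indicator_of_notMem hσ]
          exact (Real.exp_pos _).le
      calc c = ∫ σv : Fin n → Fin N → ℝ, (Cb.indicator fun _ => c) σv := by
            rw [integral_indicator_const _ hCbmeas, measureReal_def, hCbvol]
            simp
        _ ≤ ∫ σv : Fin n → Fin N → ℝ, Real.exp (Xgen u φ ψ h κ lam η G z σv) :=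
            integral_mono hind hXint hle
        _ = Zgen u φ ψ h κ lam η G z := rfl
    have hZpos : 0 < Zgen u φ ψ h κ lam η G z := lt_of_lt_of_le hcpos hZlow
    have hnum : (∫ σv : Fin n → Fin N → ℝ,
        Real.exp (t * (cnorm σv) ^ 2) * Real.exp (Xgen u φ ψ h κ lam η G z σv))
        ≤ Real.exp ((N:ℝ) * C1 * (1 + h ^ 2)) * c0 ^ (N * n) := by
      calc (∫ σv : Fin n → Fin N → ℝ,
            Real.exp (t * (cnorm σv) ^ 2) * Real.exp (Xgen u φ ψ h κ lam η G z σv))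
          ≤ ∫ σv : Fin n → Fin N → ℝ, Real.exp ((N:ℝ) * C1 * (1 + h ^ 2))
              * ∏ ℓ, ∏ i, Real.exp (-(κ / 2) * (σv ℓ i) ^ 2) := by
            apply integral_mono_of_nonneg
            · exact Filter.Eventually.of_forall fun σv => by positivity
            · exact hgauss_int.const_mul _
            · exact Filter.Eventually.of_forall fun σv => hdom t ht σv
        _ = Real.exp ((N:ℝ) * C1 * (1 + h ^ 2)) * c0 ^ (N * n) := by
            rw [integral_const_mul, hgauss_eval]
    have hkey : Real.exp ((N:ℝ) * C1 * (1 + h ^ 2)) * c0 ^ (N * n)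
        ≤ Real.exp (K * (N:ℝ) * E) * c := by
      rw [hc_def, ← Real.exp_add]
      have hpow : c0 ^ (N * n) = Real.exp (((N * n : ℕ) : ℝ) * Real.log c0) := by
        rw [Real.exp_nat_mul, Real.exp_log hc0pos]
      rw [hpow, ← Real.exp_add]
      apply Real.exp_le_exp.2
      push_cast
      have hlc : Real.log c0 ≤ |Real.log c0| * E := by
        calc Real.log c0 ≤ |Real.log c0| := le_abs_self _
          _ ≤ |Real.log c0| * E := le_mul_of_one_le_right (abs_nonneg _) hE1
      have g1 : (N:ℝ) * (C1 * (1 + h ^ 2)) ≤ (N:ℝ) * (C1 * E) :=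
        mul_le_mul_of_nonneg_left (mul_le_mul_of_nonneg_left hEh hC1nn) hNnn
      have g2 : (N:ℝ) * ((n:ℝ) * Real.log c0) ≤ (N:ℝ) * ((n:ℝ) * (|Real.log c0| * E)) :=
        mul_le_mul_of_nonneg_left (mul_le_mul_of_nonneg_left hlc hnnn) hNnn
      have g3 : 0 ≤ (N:ℝ) * E := mul_nonneg hNnn hEnn
      rw [hK_def]
      linarith only [g1, g2, g3]
    simp only [gibbsGen]
    rw [div_le_iff₀ hZpos]
    calc (∫ σv : Fin n → Fin N → ℝ,
          Real.exp (t * (cnorm σv) ^ 2) * Real.exp (Xgen u φ ψ h κ lam η G z σv))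
        ≤ Real.exp ((N:ℝ) * C1 * (1 + h ^ 2)) * c0 ^ (N * n) := hnum
      _ ≤ Real.exp (K * (N:ℝ) * E) * c := hkey
      _ ≤ Real.exp (K * (N:ℝ) * E) * Zgen u φ ψ h κ lam η G z :=
        mul_le_mul_of_nonneg_left hZlow (Real.exp_pos _).le

end
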